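/- The autocorrelation coefficients of the gTM sequence satisfy the linear recursion η((k+ℓ)m + r) = (1/(k+ℓ)) (α_{k,ℓ,r} η(m) + α_{k,ℓ,k+ℓ−r} η(m+1)) for all m ∈ ℤ and 0 ≤ r < k+ℓ, where α_{k,ℓ,r} = k+ℓ−r−2·min(k,ℓ,r,k+ℓ−r). -/

import Mathlib

open Filter

/-- `α_{k,ℓ,r} = k + ℓ - r - 2 min(k, ℓ, r, k+ℓ-r)`. -/
def gtmAlpha (k ℓ r : ℤ) : ℤ :=
  k + ℓ - r - 2 * min (min k ℓ) (min r (k + ℓ - r))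

lemma ico_signed_sum (lo hi a b : ℤ) (h : lo ≤ hi) :
    ∑ s ∈ Finset.Ico lo hi, (if a ≤ s ∧ s < b then (-1:ℤ) else 1)
      = (hi - lo) - 2 * max 0 (min b hi - max a lo) := by
  have h1 : ∀ s ∈ Finset.Ico lo hi, (if a ≤ s ∧ s < b then (-1:ℤ) else 1)
      = 1 - 2 * (if a ≤ s ∧ s < b then (1:ℤ) else 0) := by
    intro s _; split_ifs <;> ring
  rw [Finset.sum_congr rfl h1, Finset.sum_sub_distrib, Finset.sum_const, ← Finset.mul_sum,
    Finset.sum_boole]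
  have h2 : Finset.filter (fun s => a ≤ s ∧ s < b) (Finset.Ico lo hi)
      = Finset.Ico (max a lo) (min b hi) := by
    ext s; simp only [Finset.mem_filter, Finset.mem_Ico, max_le_iff, lt_min_iff]; omega
  rw [h2, Int.card_Ico, Int.card_Ico]
  simp only [nsmul_eq_mul, mul_one]
  omega

lemma gtmAlpha_comm (k ℓ r : ℤ) : gtmAlpha ℓ k r = gtmAlpha k ℓ r := by
  unfold gtmAlpha; omega

lemma sumA (k ℓ r : ℤ) (hk : 1 ≤ k) (hℓ : 1 ≤ ℓ) (h0 : 0 ≤ r) (h1 : r ≤ k + ℓ) :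
    ∑ s ∈ Finset.Ico r (k+ℓ), (if s < k then (1:ℤ) else -1) * (if s - r < k then (1:ℤ) else -1)
      = gtmAlpha k ℓ r := by
  have h1' : ∀ s ∈ Finset.Ico r (k+ℓ), (if s < k then (1:ℤ) else -1) * (if s - r < k then (1:ℤ) else -1)
      = (if k ≤ s ∧ s < k + r then (-1:ℤ) else 1) := by
    intro s hs
    rw [Finset.mem_Ico] at hs
    split_ifs <;> omega
  rw [Finset.sum_congr rfl h1', ico_signed_sum _ _ _ _ (by omega)]
  unfold gtmAlpha; omega

lemma sumB (k ℓ r : ℤ) (hk : 1 ≤ k) (hℓ : 1 ≤ ℓ) (h0 : 0 ≤ r) (h1 : r ≤ k + ℓ) :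
    ∑ s ∈ Finset.Ico 0 r, (if s < k then (1:ℤ) else -1) * (if s + (k+ℓ) - r < k then (1:ℤ) else -1)
      = gtmAlpha k ℓ (k + ℓ - r) := by
  have h1' : ∀ s ∈ Finset.Ico 0 r, (if s < k then (1:ℤ) else -1) * (if s + (k+ℓ) - r < k then (1:ℤ) else -1)
      = (if r - ℓ ≤ s ∧ s < k then (-1:ℤ) else 1) := by
    intro s hs
    rw [Finset.mem_Ico] at hs
    split_ifs <;> omega
  rw [Finset.sum_congr rfl h1', ico_signed_sum _ _ _ _ (by omega)]
  unfold gtmAlpha; omega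

lemma wblock (k ℓ : ℕ) (hk : 1 ≤ k) (hℓ : 1 ≤ ℓ)
    (v : ℕ → ℤ)
    (hfix1 : ∀ m r, r < k → v ((k + ℓ) * m + r) = v m)
    (hfix2 : ∀ m r, k ≤ r → r < k + ℓ → v ((k + ℓ) * m + r) = -(v m))
    (w : ℤ → ℤ)
    (hw1 : ∀ i : ℤ, 0 ≤ i → w i = v i.toNat)
    (hw2 : ∀ i : ℤ, i < 0 → w i = v (-i - 1).toNat)
    (q s : ℤ) (hs0 : 0 ≤ s) (hs1 : s < (k:ℤ) + ℓ) :
    w (((k:ℤ) + ℓ) * q + s) =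
      (if 0 ≤ q then (if s < (k:ℤ) then 1 else -1) else (if s < (ℓ:ℤ) then -1 else 1)) * w q := by
  obtain ⟨b, rfl⟩ := Int.eq_ofNat_of_zero_le hs0
  have hb : b < k + ℓ := by exact_mod_cast hs1
  rcases le_or_gt 0 q with hq | hq
  · obtain ⟨a, rfl⟩ := Int.eq_ofNat_of_zero_le hq
    have hn : ((k:ℤ)+ℓ) * a + b = (((k+ℓ)*a + b : ℕ) : ℤ) := by push_cast; ring
    rw [hn, hw1 _ (by positivity), Int.toNat_natCast,
      hw1 _ (by positivity), Int.toNat_natCast]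
    rw [if_pos (by positivity)]
    by_cases hbk : b < k
    · rw [hfix1 a b hbk, if_pos (by exact_mod_cast hbk), one_mul]
    · rw [hfix2 a b (by omega) hb, if_neg (by exact_mod_cast hbk)]; ring
  · have hq1 : q ≤ -1 := by omega
    obtain ⟨a, rfl⟩ : ∃ a : ℕ, q = -(a:ℤ) - 1 := ⟨(-q-1).toNat, by omega⟩
    set c : ℕ := k + ℓ - 1 - b with hcdef
    have hc : (c:ℤ) = (k:ℤ) + ℓ - 1 - b := by omega
    have hneg : ((k:ℤ)+ℓ) * (-(a:ℤ)-1) + b < 0 := by nlinarith [Int.natCast_nonneg a, Int.natCast_nonneg k, Int.natCast_nonneg ℓ]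
    rw [hw2 _ hneg]
    have h2 : -(((k:ℤ)+ℓ) * (-(a:ℤ)-1) + b) - 1 = (((k+ℓ)*a + c : ℕ) : ℤ) := by
      push_cast [hc]; ring
    rw [h2, Int.toNat_natCast]
    have h3 : w (-(a:ℤ) - 1) = v a := by
      rw [hw2 _ (by omega)]
      norm_num
    rw [h3, if_neg (by omega)]
    by_cases hbl : (b:ℤ) < ℓ
    · rw [if_pos hbl, hfix2 a c (by omega) (by omega)]; ring
    · have : b ≥ ℓ := by exact_mod_cast not_lt.mp hbl
      rw [if_neg hbl, hfix1 a c (by omega), one_mul]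

lemma sumA' (k ℓ r : ℤ) (hk : 1 ≤ k) (hℓ : 1 ≤ ℓ) (h0 : 0 ≤ r) (h1 : r ≤ k + ℓ) :
    ∑ s ∈ Finset.Ico r (k+ℓ), (if s < ℓ then (1:ℤ) else -1) * (if s - r < ℓ then (1:ℤ) else -1)
      = gtmAlpha k ℓ r := by
  rw [show k + ℓ = ℓ + k from by ring, ← gtmAlpha_comm]
  exact sumA ℓ k r hℓ hk h0 (by omega)

lemma sumB' (k ℓ r : ℤ) (hk : 1 ≤ k) (hℓ : 1 ≤ ℓ) (h0 : 0 ≤ r) (h1 : r ≤ k + ℓ) :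
    ∑ s ∈ Finset.Ico 0 r, (if s < ℓ then (1:ℤ) else -1) * (if s + (k+ℓ) - r < ℓ then (1:ℤ) else -1)
      = gtmAlpha k ℓ (k + ℓ - r) := by
  rw [show k + ℓ = ℓ + k from by ring, ← gtmAlpha_comm]
  exact sumB ℓ k r hℓ hk h0 (by omega)

lemma blocksum (k ℓ : ℕ) (hk : 1 ≤ k) (hℓ : 1 ≤ ℓ) (w : ℤ → ℤ)
    (hwb : ∀ q s : ℤ, 0 ≤ s → s < (k:ℤ) + ℓ → w (((k:ℤ) + ℓ) * q + s) =
      (if 0 ≤ q then (if s < (k:ℤ) then 1 else -1) else (if s < (ℓ:ℤ) then -1 else 1)) * w q)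
    (m r : ℤ) (hr0 : 0 ≤ r) (hr1 : r < (k:ℤ) + ℓ)
    (q : ℤ) (hgen : (0 ≤ q ∧ 0 ≤ q - m - 1) ∨ (q < 0 ∧ q - m < 0)) :
    ∑ s ∈ Finset.Ico (0:ℤ) ((k:ℤ)+ℓ),
        w (((k:ℤ)+ℓ)*q+s) * w (((k:ℤ)+ℓ)*q+s - (((k:ℤ)+ℓ)*m+r))
      = gtmAlpha k ℓ r * (w q * w (q-m))
        + gtmAlpha k ℓ ((k:ℤ)+ℓ-r) * (w q * w (q-m-1)) := by
  have hkz : (1:ℤ) ≤ k := by exact_mod_cast hk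
  have hlz : (1:ℤ) ≤ ℓ := by exact_mod_cast hℓ
  set K : ℤ := (k:ℤ) + ℓ with hK
  have key1 : ∑ s ∈ Finset.Ico r K, w (K*q+s) * w (K*q+s - (K*m+r))
      = gtmAlpha k ℓ r * (w q * w (q-m)) := by
    rcases hgen with h | h
    · have hcong : ∀ s ∈ Finset.Ico r K, w (K*q+s) * w (K*q+s - (K*m+r))
          = ((if s < (k:ℤ) then (1:ℤ) else -1) * (if s - r < (k:ℤ) then (1:ℤ) else -1))
            * (w q * w (q-m)) := by
        intro s hs; rw [Finset.mem_Ico] at hs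
        have harg : K*q+s - (K*m+r) = K*(q-m)+(s-r) := by ring
        rw [harg, hwb q s (by omega) (by omega), hwb (q-m) (s-r) (by omega) (by omega),
          if_pos (show (0:ℤ) ≤ q by omega), if_pos (show (0:ℤ) ≤ q - m by omega)]
        ring
      rw [Finset.sum_congr rfl hcong, ← Finset.sum_mul, sumA k ℓ r hkz hlz hr0 (by omega)]
    · have hcong : ∀ s ∈ Finset.Ico r K, w (K*q+s) * w (K*q+s - (K*m+r))
          = ((if s < (ℓ:ℤ) then (1:ℤ) else -1) * (if s - r < (ℓ:ℤ) then (1:ℤ) else -1))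
            * (w q * w (q-m)) := by
        intro s hs; rw [Finset.mem_Ico] at hs
        have harg : K*q+s - (K*m+r) = K*(q-m)+(s-r) := by ring
        rw [harg, hwb q s (by omega) (by omega), hwb (q-m) (s-r) (by omega) (by omega),
          if_neg (show ¬ (0:ℤ) ≤ q by omega), if_neg (show ¬ (0:ℤ) ≤ q - m by omega)]
        split_ifs <;> ring
      rw [Finset.sum_congr rfl hcong, ← Finset.sum_mul, sumA' k ℓ r hkz hlz hr0 (by omega)]
  have key2 : ∑ s ∈ Finset.Ico 0 r, w (K*q+s) * w (K*q+s - (K*m+r))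
      = gtmAlpha k ℓ (K-r) * (w q * w (q-m-1)) := by
    rcases hgen with h | h
    · have hcong : ∀ s ∈ Finset.Ico (0:ℤ) r, w (K*q+s) * w (K*q+s - (K*m+r))
          = ((if s < (k:ℤ) then (1:ℤ) else -1) * (if s + K - r < (k:ℤ) then (1:ℤ) else -1))
            * (w q * w (q-m-1)) := by
        intro s hs; rw [Finset.mem_Ico] at hs
        have harg : K*q+s - (K*m+r) = K*(q-m-1)+(s+K-r) := by ring
        rw [harg, hwb q s (by omega) (by omega), hwb (q-m-1) (s+K-r) (by omega) (by omega),
          if_pos (show (0:ℤ) ≤ q by omega), if_pos (show (0:ℤ) ≤ q - m - 1 by omega)]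
        ring
      rw [Finset.sum_congr rfl hcong, ← Finset.sum_mul, sumB k ℓ r hkz hlz hr0 (by omega)]
    · have hcong : ∀ s ∈ Finset.Ico (0:ℤ) r, w (K*q+s) * w (K*q+s - (K*m+r))
          = ((if s < (ℓ:ℤ) then (1:ℤ) else -1) * (if s + K - r < (ℓ:ℤ) then (1:ℤ) else -1))
            * (w q * w (q-m-1)) := by
        intro s hs; rw [Finset.mem_Ico] at hs
        have harg : K*q+s - (K*m+r) = K*(q-m-1)+(s+K-r) := by ring
        rw [harg, hwb q s (by omega) (by omega), hwb (q-m-1) (s+K-r) (by omega) (by omega),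
          if_neg (show ¬ (0:ℤ) ≤ q by omega), if_neg (show ¬ (0:ℤ) ≤ q - m - 1 by omega)]
        split_ifs <;> ring
      rw [Finset.sum_congr rfl hcong, ← Finset.sum_mul, sumB' k ℓ r hkz hlz hr0 (by omega)]
  rw [← Finset.Ico_union_Ico_eq_Ico hr0 (le_of_lt hr1),
    Finset.sum_union (Finset.Ico_disjoint_Ico_consecutive 0 r K), key1, key2]
  ring

lemma block_shift (K : ℤ) (f : ℤ → ℤ) (q : ℤ) :
    ∑ n ∈ Finset.Ico (K*q) (K*q+K), f n = ∑ s ∈ Finset.Ico (0:ℤ) K, f (K*q + s) := by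
  have h : Finset.Ico (K*q) (K*q+K) = Finset.map (addLeftEmbedding (K*q)) (Finset.Ico (0:ℤ) K) := by
    rw [Finset.map_add_left_Ico, add_zero]
  rw [h, Finset.sum_map]
  rfl

lemma sum_Ico_singleton (a : ℤ) (f : ℤ → ℤ) : ∑ n ∈ Finset.Ico a (a+1), f n = f a := by
  have : Finset.Ico a (a+1) = {a} := by ext x; simp; omega
  rw [this, Finset.sum_singleton]

lemma intdecomp (K : ℤ) (hK : 0 < K) (f : ℤ → ℤ) (P : ℕ) :
    ∑ n ∈ Finset.Ico (-(K*(P:ℤ))) (K*(P:ℤ)), f n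
      = ∑ q ∈ Finset.Ico (-(P:ℤ)) (P:ℤ), (∑ s ∈ Finset.Ico (0:ℤ) K, f (K*q + s)) := by
  induction P with
  | zero => simp
  | succ P ih =>
    have hP : (0:ℤ) ≤ (P:ℤ) := Int.natCast_nonneg P
    have hKP : (0:ℤ) ≤ K*(P:ℤ) := by positivity
    have hcast : ((P+1:ℕ):ℤ) = (P:ℤ)+1 := by push_cast; ring
    rw [hcast]
    have h1 : (-(K*((P:ℤ)+1))) ≤ -(K*(P:ℤ)) := by nlinarith
    have h2 : -(K*(P:ℤ)) ≤ K*(P:ℤ) := by linarith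
    have h3 : K*(P:ℤ) ≤ K*((P:ℤ)+1) := by nlinarith
    rw [← Finset.Ico_union_Ico_eq_Ico (le_trans h1 h2) h3,
      Finset.sum_union (Finset.Ico_disjoint_Ico_consecutive _ _ _),
      ← Finset.Ico_union_Ico_eq_Ico h1 h2,
      Finset.sum_union (Finset.Ico_disjoint_Ico_consecutive _ _ _)]
    rw [show K*((P:ℤ)+1) = K * (P:ℤ) + K from by ring, block_shift]
    rw [show Finset.Ico (-(K*(P:ℤ) + K)) (-(K*(P:ℤ)))
        = Finset.Ico (K * (-(P:ℤ)-1)) (K * (-(P:ℤ)-1) + K) from by congr 1 <;> ring,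
      block_shift, ih]
    have h4 : -((P:ℤ)+1) ≤ -(P:ℤ) := by linarith
    have h5 : -(P:ℤ) ≤ (P:ℤ) := by linarith
    have h6 : (P:ℤ) ≤ (P:ℤ)+1 := by linarith
    rw [← Finset.Ico_union_Ico_eq_Ico (le_trans h4 h5) h6,
      Finset.sum_union (Finset.Ico_disjoint_Ico_consecutive _ _ _),
      ← Finset.Ico_union_Ico_eq_Ico h4 h5,
      Finset.sum_union (Finset.Ico_disjoint_Ico_consecutive _ _ _)]
    rw [sum_Ico_singleton,
      show Finset.Ico (-((P:ℤ)+1)) (-(P:ℤ)) = Finset.Ico (-(P:ℤ)-1) ((-(P:ℤ)-1)+1) from by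
        congr 1 <;> ring,
      sum_Ico_singleton]

set_option maxHeartbeats 1000000 in
/-- the autocorrelation coefficients of the gTM sequence satisfy
`η ((k+ℓ)m + r) = (α_{k,ℓ,r} η(m) + α_{k,ℓ,k+ℓ-r} η(m+1)) / (k+ℓ)`
for all `m ∈ ℤ` and `0 ≤ r < k+ℓ`. -/
theorem gtm_autocorrelation_recursion (k ℓ : ℕ) (hk : 1 ≤ k) (hℓ : 1 ≤ ℓ)
    (v : ℕ → ℤ) (hpm : ∀ n, v n = 1 ∨ v n = -1) (hv0 : v 0 = 1)
    (hfix1 : ∀ m r, r < k → v ((k + ℓ) * m + r) = v m)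
    (hfix2 : ∀ m r, k ≤ r → r < k + ℓ → v ((k + ℓ) * m + r) = -(v m))
    (w : ℤ → ℤ)
    (hw1 : ∀ i : ℤ, 0 ≤ i → w i = v i.toNat)
    (hw2 : ∀ i : ℤ, i < 0 → w i = v (-i - 1).toNat)
    (η : ℤ → ℝ)
    (hη : ∀ m : ℤ, Tendsto
      (fun N : ℕ => (1 / (2 * (N : ℝ) + 1)) *
        ∑ n ∈ Finset.Icc (-(N : ℤ)) (N : ℤ), (w n : ℝ) * (w (n - m) : ℝ))
      atTop (nhds (η m)))
    (hsym : ∀ m : ℤ, η (-m) = η m) :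
    ∀ (m r : ℤ), 0 ≤ r → r < (k : ℤ) + ℓ →
      η (((k : ℤ) + ℓ) * m + r) = (1 / ((k : ℝ) + ℓ)) *
        ((gtmAlpha k ℓ r : ℝ) * η m + (gtmAlpha k ℓ ((k : ℤ) + ℓ - r) : ℝ) * η (m + 1)) := by
  intro m r hr0 hr1
  have hkz : (1:ℤ) ≤ (k:ℤ) := by exact_mod_cast hk
  have hlz : (1:ℤ) ≤ (ℓ:ℤ) := by exact_mod_cast hℓ
  have hwb : ∀ q s : ℤ, 0 ≤ s → s < (k:ℤ)+ℓ → w (((k:ℤ)+ℓ)*q+s) =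
      (if 0 ≤ q then (if s < (k:ℤ) then 1 else -1) else (if s < (ℓ:ℤ) then -1 else 1)) * w q :=
    fun q s h1 h2 => wblock k ℓ hk hℓ v hfix1 hfix2 w hw1 hw2 q s h1 h2
  have hwpm : ∀ i : ℤ, w i = 1 ∨ w i = -1 := by
    intro i; rcases le_or_gt 0 i with h | h
    · rw [hw1 i h]; exact hpm _
    · rw [hw2 i h]; exact hpm _
  have hwabs : ∀ i j : ℤ, |(w i : ℝ) * (w j : ℝ)| ≤ 1 := by
    intro i j
    rcases hwpm i with h | h <;> rcases hwpm j with h' | h' <;> rw [h, h'] <;> norm_num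
  set K : ℤ := (k:ℤ) + ℓ with hK
  set t : ℤ := K * m + r with ht
  set A : ℤ := gtmAlpha k ℓ r with hA
  set B : ℤ := gtmAlpha k ℓ (K - r) with hB
  set g : ℤ → ℤ := fun q => ∑ s ∈ Finset.Ico (0:ℤ) K, (w (K*q+s) * w (K*q+s - t)) with hg
  set φ : ℤ → ℤ := fun q => g q - A * (w q * w (q-m)) - B * (w q * w (q-m-1)) with hφ
  have habs1 : m ≤ |m| := le_abs_self m
  have habs2 : -m ≤ |m| := neg_le_abs m
  have hφ0 : ∀ q : ℤ, |m| + 1 ≤ q ∨ q < -(|m| + 1) → φ q = 0 := by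
    intro q hq
    have hgen : (0 ≤ q ∧ 0 ≤ q - m - 1) ∨ (q < 0 ∧ q - m < 0) := by
      rcases hq with h | h
      · left; constructor <;> omega
      · right; constructor <;> omega
    have hb := blocksum k ℓ hk hℓ w hwb m r hr0 hr1 q hgen
    simp only [hφ, hg, hA, hB, hK]
    rw [hb]
    ring
  set Cphi : ℤ := ∑ q ∈ Finset.Ico (-(|m|+1)) (|m|+1), φ q with hCphi
  -- the NM sequence
  set NM : ℕ → ℕ := fun M => (k+ℓ)*(M+1) - 1 with hNM
  have hNMz : ∀ M : ℕ, ((NM M : ℤ)) = K*((M:ℤ)+1) - 1 := by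
    intro M
    have h1 : 1 ≤ (k+ℓ)*(M+1) := Nat.one_le_iff_ne_zero.mpr (Nat.mul_ne_zero (by omega) (by omega))
    simp only [hNM]
    push_cast [Nat.cast_sub h1]
    ring
  have hNMr : ∀ M : ℕ, ((NM M : ℝ)) = (K:ℝ)*((M:ℝ)+1) - 1 := by
    intro M
    have := hNMz M
    exact_mod_cast congrArg (fun z : ℤ => (z:ℝ)) this
  -- master identity
  have master : ∀ M : ℕ, |m| + 1 ≤ (M:ℤ) + 1 →
      ∑ n ∈ Finset.Icc (-(NM M : ℤ)) (NM M : ℤ), w n * w (n - t)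
        = A * (∑ q ∈ Finset.Icc (-((M:ℤ)+1)) ((M:ℤ)+1), w q * w (q-m))
          + B * (∑ q ∈ Finset.Icc (-((M:ℤ)+1)) ((M:ℤ)+1), w q * w (q-(m+1)))
          + (Cphi - w (-(NM M:ℤ)-1) * w (-(NM M:ℤ)-1 - t)
             - A * (w ((M:ℤ)+1) * w ((M:ℤ)+1-m)) - B * (w ((M:ℤ)+1) * w ((M:ℤ)-m))) := by
    intro M hM
    set km : ℤ := K*((M:ℤ)+1) with hkm
    have hkm2 : (NM M : ℤ) = km - 1 := hNMz M
    have hMz : (0:ℤ) ≤ (M:ℤ) := Int.natCast_nonneg M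
    have hkmpos : 2 ≤ km := by nlinarith
    -- step 1+2: Icc sum = block-range sum minus the bottom point
    have hIcc : Finset.Icc (-(NM M : ℤ)) (NM M : ℤ) = Finset.Ico (-km+1) km := by
      rw [hkm2]; ext x; simp only [Finset.mem_Icc, Finset.mem_Ico]; omega
    have hsplit1 : ∑ n ∈ Finset.Ico (-km) km, w n * w (n - t)
        = w (-km) * w (-km - t) + ∑ n ∈ Finset.Ico (-km+1) km, w n * w (n - t) := by
      rw [← Finset.Ico_union_Ico_eq_Ico (show -km ≤ -km+1 by omega) (show -km+1 ≤ km by omega),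
        Finset.sum_union (Finset.Ico_disjoint_Ico_consecutive _ _ _), sum_Ico_singleton]
    -- step 3: block decomposition
    have hc : ((M+1:ℕ):ℤ) = (M:ℤ)+1 := by push_cast; ring
    have hdec := intdecomp K (by omega) (fun n => w n * w (n - t)) (M+1)
    rw [hc] at hdec
    rw [← hkm] at hdec
    -- step 4+5: block sums via φ
    have hgsum : ∑ q ∈ Finset.Ico (-((M:ℤ)+1)) ((M:ℤ)+1), g q
        = Cphi + A * (∑ q ∈ Finset.Ico (-((M:ℤ)+1)) ((M:ℤ)+1), w q * w (q-m))
          + B * (∑ q ∈ Finset.Ico (-((M:ℤ)+1)) ((M:ℤ)+1), w q * w (q-(m+1))) := by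
      have h1 : ∀ q ∈ Finset.Ico (-((M:ℤ)+1)) ((M:ℤ)+1), g q
          = φ q + (A * (w q * w (q-m)) + B * (w q * w (q-(m+1)))) := by
        intro q _
        have hfix : q - (m+1) = q - m - 1 := by ring
        rw [hfix]; simp only [hφ]; ring
      rw [Finset.sum_congr rfl h1, Finset.sum_add_distrib, Finset.sum_add_distrib,
        ← Finset.mul_sum, ← Finset.mul_sum]
      have h2 : ∑ q ∈ Finset.Ico (-((M:ℤ)+1)) ((M:ℤ)+1), φ q = Cphi := by
        rw [hCphi]
        refine (Finset.sum_subset ?_ ?_).symm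
        · intro x hx
          simp only [Finset.mem_Ico] at hx ⊢
          omega
        · intro x hx hnx
          simp only [Finset.mem_Ico] at hx hnx
          apply hφ0
          omega
      rw [h2]; ring
    -- step 6: Ico to Icc for the q-sums
    have hIcoIcc : ∀ m' : ℤ, ∑ q ∈ Finset.Ico (-((M:ℤ)+1)) ((M:ℤ)+1), w q * w (q - m')
        = (∑ q ∈ Finset.Icc (-((M:ℤ)+1)) ((M:ℤ)+1), w q * w (q - m'))
          - w ((M:ℤ)+1) * w ((M:ℤ)+1 - m') := by
      intro m'
      have h3 : Finset.Icc (-((M:ℤ)+1)) ((M:ℤ)+1) = Finset.Ico (-((M:ℤ)+1)) (((M:ℤ)+1)+1) := by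
        ext x; simp only [Finset.mem_Icc, Finset.mem_Ico]; omega
      rw [h3, ← Finset.Ico_union_Ico_eq_Ico (show -((M:ℤ)+1) ≤ (M:ℤ)+1 by omega)
          (show (M:ℤ)+1 ≤ ((M:ℤ)+1)+1 by omega),
        Finset.sum_union (Finset.Ico_disjoint_Ico_consecutive _ _ _), sum_Ico_singleton]
      ring
    -- assemble
    rw [hIcc]
    have : ∑ n ∈ Finset.Ico (-km+1) km, w n * w (n - t)
        = (∑ q ∈ Finset.Ico (-((M:ℤ)+1)) ((M:ℤ)+1), g q) - w (-km) * w (-km - t) := by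
      rw [← hdec, hsplit1]; ring
    rw [this, hgsum, hIcoIcc m, hIcoIcc (m+1), hkm2]
    have e1 : -(km - 1) - 1 = -km := by ring
    rw [e1]
    have e2 : (M:ℤ)+1-(m+1) = (M:ℤ)-m := by ring
    rw [e2]
    ring

    -- ### the limit argument ###
  have hNMge : ∀ M : ℕ, M ≤ NM M := by
    intro M
    have h2 : 2*(M+1) ≤ (k+ℓ)*(M+1) := Nat.mul_le_mul_right _ (by omega)
    simp only [hNM]; omega
  have hNMtend : Tendsto NM atTop atTop :=
    tendsto_atTop_mono hNMge tendsto_id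
  have hi : Tendsto (fun M : ℕ => (1 / (2 * ((NM M) : ℝ) + 1)) *
      ∑ n ∈ Finset.Icc (-(NM M : ℤ)) (NM M : ℤ), (w n : ℝ) * (w (n - t) : ℝ))
      atTop (nhds (η t)) := (hη t).comp hNMtend
  -- auxiliary sequences
  set aseq : ℕ → ℝ := fun M => (1/(2*((M:ℝ)+1)+1)) *
      ∑ n ∈ Finset.Icc (-((M:ℤ)+1)) ((M:ℤ)+1), (w n : ℝ) * (w (n - m) : ℝ) with haseq
  set bseq : ℕ → ℝ := fun M => (1/(2*((M:ℝ)+1)+1)) *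
      ∑ n ∈ Finset.Icc (-((M:ℤ)+1)) ((M:ℤ)+1), (w n : ℝ) * (w (n - (m+1)) : ℝ) with hbseq
  set cseq : ℕ → ℝ := fun M => (2*((M:ℝ)+1)+1)/(2*((NM M):ℝ)+1) with hcseq'
  set d : ℕ → ℝ := fun M => ((Cphi:ℝ)
      - (w (-(NM M:ℤ)-1) : ℝ) * (w (-(NM M:ℤ)-1 - t) : ℝ)
      - (A:ℝ) * ((w ((M:ℤ)+1) : ℝ) * (w ((M:ℤ)+1-m) : ℝ))
      - (B:ℝ) * ((w ((M:ℤ)+1) : ℝ) * (w ((M:ℤ)-m) : ℝ))) with hd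
  set eseq : ℕ → ℝ := fun M => (1/(2*((NM M):ℝ)+1)) * d M with heseq
  have ha : Tendsto aseq atTop (nhds (η m)) := by
    have h := (hη m).comp (tendsto_add_atTop_nat 1)
    refine h.congr fun M => ?_
    have h1 : ((M+1:ℕ):ℝ) = (M:ℝ)+1 := by push_cast; ring
    have h2 : ((M+1:ℕ):ℤ) = (M:ℤ)+1 := by push_cast; ring
    simp only [haseq, Function.comp, h1, h2]
  have hb : Tendsto bseq atTop (nhds (η (m+1))) := by
    have h := (hη (m+1)).comp (tendsto_add_atTop_nat 1)
    refine h.congr fun M => ?_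
    have h1 : ((M+1:ℕ):ℝ) = (M:ℝ)+1 := by push_cast; ring
    have h2 : ((M+1:ℕ):ℤ) = (M:ℤ)+1 := by push_cast; ring
    simp only [hbseq, Function.comp, h1, h2]
  have hKrpos : (0:ℝ) < (K:ℝ) := by
    have : (0:ℤ) < K := by omega
    exact_mod_cast this
  have hNMdenpos : ∀ M : ℕ, (0:ℝ) < 2*((NM M):ℝ)+1 := by
    intro M; positivity
  have h1 : Tendsto (fun M : ℕ => 2*((NM M):ℝ)+1) atTop atTop := by
    refine tendsto_atTop_mono (f := fun M : ℕ => (M:ℝ)) ?_ tendsto_natCast_atTop_atTop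
    intro M
    have h2 : ((M:ℝ)) ≤ ((NM M):ℝ) := by exact_mod_cast hNMge M
    have h3 : (0:ℝ) ≤ ((NM M):ℝ) := by positivity
    linarith
  have hinv : Tendsto (fun M : ℕ => 1/(2*((NM M):ℝ)+1)) atTop (nhds 0) := by
    have := tendsto_inv_atTop_zero.comp h1
    refine this.congr fun M => ?_
    simp [Function.comp, one_div]
  have hc : Tendsto cseq atTop (nhds (1/(K:ℝ))) := by
    have heq : ∀ M : ℕ, cseq M
        = 1/(K:ℝ) + (((K:ℝ)+1)/(K:ℝ)) * (1/(2*((NM M):ℝ)+1)) := by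
      intro M
      have hdc := hNMdenpos M
      simp only [hcseq']
      rw [hNMr M] at hdc ⊢
      set D : ℝ := 2*((K:ℝ)*((M:ℝ)+1)-1)+1 with hD
      field_simp
      rw [hD]
      ring
    have h2 : Tendsto (fun M : ℕ => 1/(K:ℝ) + (((K:ℝ)+1)/(K:ℝ)) * (1/(2*((NM M):ℝ)+1)))
        atTop (nhds (1/(K:ℝ) + (((K:ℝ)+1)/(K:ℝ)) * 0)) :=
      tendsto_const_nhds.add (tendsto_const_nhds.mul hinv)
    rw [mul_zero, add_zero] at h2
    exact h2.congr fun M => (heq M).symm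
  -- the error sequence tends to 0
  have hdbound : ∀ M : ℕ, |d M| ≤ |(Cphi:ℝ)| + 1 + |(A:ℝ)| + |(B:ℝ)| := by
    intro M
    have e1 := hwabs (-(NM M:ℤ)-1) (-(NM M:ℤ)-1 - t)
    have e2 := hwabs ((M:ℤ)+1) ((M:ℤ)+1-m)
    have e3 := hwabs ((M:ℤ)+1) ((M:ℤ)-m)
    have f2 : |(A:ℝ) * ((w ((M:ℤ)+1) : ℝ) * (w ((M:ℤ)+1-m) : ℝ))| ≤ |(A:ℝ)| := by
      rw [abs_mul]
      calc |(A:ℝ)| * |(w ((M:ℤ)+1) : ℝ) * (w ((M:ℤ)+1-m) : ℝ)| ≤ |(A:ℝ)| * 1 :=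
        mul_le_mul_of_nonneg_left e2 (abs_nonneg _)
      _ = |(A:ℝ)| := mul_one _
    have f3 : |(B:ℝ) * ((w ((M:ℤ)+1) : ℝ) * (w ((M:ℤ)-m) : ℝ))| ≤ |(B:ℝ)| := by
      rw [abs_mul]
      calc |(B:ℝ)| * |(w ((M:ℤ)+1) : ℝ) * (w ((M:ℤ)-m) : ℝ)| ≤ |(B:ℝ)| * 1 :=
        mul_le_mul_of_nonneg_left e3 (abs_nonneg _)
      _ = |(B:ℝ)| := mul_one _
    simp only [hd]
    set x1 := (w (-(NM M:ℤ)-1) : ℝ) * (w (-(NM M:ℤ)-1 - t) : ℝ)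
    set x2 := (A:ℝ) * ((w ((M:ℤ)+1) : ℝ) * (w ((M:ℤ)+1-m) : ℝ))
    set x3 := (B:ℝ) * ((w ((M:ℤ)+1) : ℝ) * (w ((M:ℤ)-m) : ℝ))
    have g0 := le_abs_self ((Cphi:ℝ)); have g0' := neg_abs_le ((Cphi:ℝ))
    have g1 := le_abs_self x1; have g1' := neg_abs_le x1
    have g2 := le_abs_self x2; have g2' := neg_abs_le x2
    have g3 := le_abs_self x3; have g3' := neg_abs_le x3
    rw [abs_le]
    constructor <;> linarith [g0, g0', g1, g1', g2, g2', g3, g3', e1, f2, f3]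
  have he : Tendsto eseq atTop (nhds 0) := by
    have hbnd : ∀ M : ℕ, ‖eseq M‖ ≤
        (|(Cphi:ℝ)| + 1 + |(A:ℝ)| + |(B:ℝ)|) * (1/(2*((NM M):ℝ)+1)) := by
      intro M
      have hp := hNMdenpos M
      simp only [heseq, Real.norm_eq_abs, abs_mul, abs_of_pos (one_div_pos.mpr hp)]
      rw [mul_comm]
      exact mul_le_mul_of_nonneg_right (hdbound M) (le_of_lt (one_div_pos.mpr hp))
    have htnd : Tendsto (fun M : ℕ =>
        (|(Cphi:ℝ)| + 1 + |(A:ℝ)| + |(B:ℝ)|) * (1/(2*((NM M):ℝ)+1))) atTop (nhds 0) := by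
      have := hinv.const_mul (|(Cphi:ℝ)| + 1 + |(A:ℝ)| + |(B:ℝ)|)
      simpa using this
    exact squeeze_zero_norm hbnd htnd
  -- eventual identity
  have hev : ∀ᶠ M : ℕ in atTop,
      cseq M * ((A:ℝ) * aseq M + (B:ℝ) * bseq M) + eseq M
        = (1 / (2 * ((NM M) : ℝ) + 1)) *
          ∑ n ∈ Finset.Icc (-(NM M : ℤ)) (NM M : ℤ), (w n : ℝ) * (w (n - t) : ℝ) := by
    rw [eventually_atTop]
    refine ⟨m.natAbs, fun M hM => ?_⟩
    have habs : |m| = (m.natAbs:ℤ) := Int.abs_eq_natAbs m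
    have hmaster := master M (by omega)
    have hcast := congrArg (fun z : ℤ => (z:ℝ)) hmaster
    push_cast at hcast
    have hp := hNMdenpos M
    have hp2 : (0:ℝ) < 2*((M:ℝ)+1)+1 := by positivity
    simp only [haseq, hbseq, hcseq', heseq, hd]
    rw [hcast]
    field_simp
  -- combine
  have hii : Tendsto (fun M : ℕ => (1 / (2 * ((NM M) : ℝ) + 1)) *
      ∑ n ∈ Finset.Icc (-(NM M : ℤ)) (NM M : ℤ), (w n : ℝ) * (w (n - t) : ℝ))
      atTop (nhds (1/(K:ℝ) * ((A:ℝ) * η m + (B:ℝ) * η (m+1)) + 0)) := by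
    refine Tendsto.congr' hev ?_
    exact Tendsto.add (hc.mul ((ha.const_mul _).add (hb.const_mul _))) he
  rw [add_zero] at hii
  have hfinal := tendsto_nhds_unique hi hii
  rw [hfinal]
  have hKcast : (K:ℝ) = (k:ℝ) + ℓ := by rw [hK]; push_cast; ring
  rw [hKcast]
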